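/- Positive conjugation compatibility of patterns: let B ∈ M_n(ℝ) be skew-symmetrizable and H a positive diagonal matrix; set B̂ = H B H^{-1}. Then for every vertex t of the n-regular tree, the patterns satisfy B̂_t = H B_t H^{-1}, Ĉ_t = H C_t H^{-1}, and Ĝ_t = H G_t H^{-1}, where hatted matrices are the B-, C-, G-patterns with initial matrix B̂ and unhatted ones those with initial matrix B. -/

import Mathlib

open Matrix

noncomputable section

/-- Entrywise positive part `[A]₊`. -/
def matPos {n : ℕ} (A : Matrix (Fin n) (Fin n) ℝ) : Matrix (Fin n) (Fin n) ℝ :=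
  fun i j => max (A i j) 0

/-- `J_k`: the identity matrix with the `(k,k)` entry replaced by `-1`. -/
def Jmat {n : ℕ} (k : Fin n) : Matrix (Fin n) (Fin n) ℝ :=
  Matrix.diagonal (fun i => if i = k then -1 else 1)

/-- `A^{k•} = E_kk A`: keep only the `k`-th row of `A`. -/
def rowOnly {n : ℕ} (k : Fin n) (A : Matrix (Fin n) (Fin n) ℝ) : Matrix (Fin n) (Fin n) ℝ :=
  fun i j => if i = k then A i j else 0

/-- `A^{•k} = A E_kk`: keep only the `k`-th column of `A`. -/
def colOnly {n : ℕ} (k : Fin n) (A : Matrix (Fin n) (Fin n) ℝ) : Matrix (Fin n) (Fin n) ℝ :=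
  fun i j => if j = k then A i j else 0

/-- Matrix mutation `μ_k(B) = (J_k + [-B]₊^{•k}) B (J_k + [B]₊^{k•})`. -/
def mutB {n : ℕ} (B : Matrix (Fin n) (Fin n) ℝ) (k : Fin n) : Matrix (Fin n) (Fin n) ℝ :=
  (Jmat k + colOnly k (matPos (-B))) * B * (Jmat k + rowOnly k (matPos B))

/-- `B` is skew-symmetrizable: there is a positive diagonal `D` with `DB` skew-symmetric. -/
def SkewSymmetrizable {n : ℕ} (B : Matrix (Fin n) (Fin n) ℝ) : Prop :=
  ∃ d : Fin n → ℝ, (∀ i, 0 < d i) ∧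
    (Matrix.diagonal d * B)ᵀ = -(Matrix.diagonal d * B)

/-- One mutation step of the triple `(B_t, C_t, G_t)` in direction `k`,
with initial exchange matrix `B0`. -/
def stepBCG {n : ℕ} (B0 : Matrix (Fin n) (Fin n) ℝ)
    (X : Matrix (Fin n) (Fin n) ℝ × Matrix (Fin n) (Fin n) ℝ × Matrix (Fin n) (Fin n) ℝ)
    (k : Fin n) :
    Matrix (Fin n) (Fin n) ℝ × Matrix (Fin n) (Fin n) ℝ × Matrix (Fin n) (Fin n) ℝ :=
  ⟨mutB X.1 k,
   X.2.1 * Jmat k + X.2.1 * rowOnly k (matPos X.1) + colOnly k (matPos (-X.2.1)) * X.1,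
   X.2.2 * Jmat k + X.2.2 * colOnly k (matPos (-X.1)) - B0 * colOnly k (matPos (-X.2.1))⟩

/-- The triple `(B_t, C_t, G_t)` at the vertex of the `n`-regular tree reached from the
initial vertex by the path `w` (a list of mutation directions). -/
def BCG {n : ℕ} (B0 : Matrix (Fin n) (Fin n) ℝ) (w : List (Fin n)) :
    Matrix (Fin n) (Fin n) ℝ × Matrix (Fin n) (Fin n) ℝ × Matrix (Fin n) (Fin n) ℝ :=
  w.foldl (stepBCG B0) (B0, 1, 1)

/-- The `B`-pattern. -/
def Bpat {n : ℕ} (B0 : Matrix (Fin n) (Fin n) ℝ) (w : List (Fin n)) :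
    Matrix (Fin n) (Fin n) ℝ := (BCG B0 w).1

/-- The `C`-pattern. -/
def Cpat {n : ℕ} (B0 : Matrix (Fin n) (Fin n) ℝ) (w : List (Fin n)) :
    Matrix (Fin n) (Fin n) ℝ := (BCG B0 w).2.1

/-- The `G`-pattern. -/
def Gpat {n : ℕ} (B0 : Matrix (Fin n) (Fin n) ℝ) (w : List (Fin n)) :
    Matrix (Fin n) (Fin n) ℝ := (BCG B0 w).2.2

/-- Column sign-coherence of a matrix. -/
def ColSignCoherent {n : ℕ} (C : Matrix (Fin n) (Fin n) ℝ) : Prop :=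
  ∀ j, (∀ i, 0 ≤ C i j) ∨ (∀ i, C i j ≤ 0)

/-- Row sign-coherence of a matrix. -/
def RowSignCoherent {n : ℕ} (G : Matrix (Fin n) (Fin n) ℝ) : Prop :=
  ∀ i, (∀ j, 0 ≤ G i j) ∨ (∀ j, G i j ≤ 0)

section Aux

variable {n : ℕ} (h : Fin n → ℝ)

/-- Conjugation by the positive diagonal matrix `diag h`. -/
def cj (A : Matrix (Fin n) (Fin n) ℝ) : Matrix (Fin n) (Fin n) ℝ :=
  Matrix.diagonal h * A * Matrix.diagonal (fun i => (h i)⁻¹)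

lemma cj_apply (A : Matrix (Fin n) (Fin n) ℝ) (i j : Fin n) :
    cj h A i j = h i * A i j * (h j)⁻¹ := by
  simp [cj, Matrix.mul_diagonal, Matrix.diagonal_mul]

lemma cj_mul (hh : ∀ i, 0 < h i) (A B : Matrix (Fin n) (Fin n) ℝ) :
    cj h (A * B) = cj h A * cj h B := by
  ext i j
  simp only [cj_apply, Matrix.mul_apply, Finset.mul_sum, Finset.sum_mul]
  refine Finset.sum_congr rfl fun k _ => ?_
  field_simp
  rw [div_eq_div_iff (hh j).ne' (mul_pos (hh j) (hh k)).ne']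
  ring

lemma cj_add (A B : Matrix (Fin n) (Fin n) ℝ) :
    cj h (A + B) = cj h A + cj h B := by
  unfold cj; rw [Matrix.mul_add, Matrix.add_mul]

lemma cj_sub (A B : Matrix (Fin n) (Fin n) ℝ) :
    cj h (A - B) = cj h A - cj h B := by
  unfold cj; rw [Matrix.mul_sub, Matrix.sub_mul]

lemma cj_neg (A : Matrix (Fin n) (Fin n) ℝ) : cj h (-A) = -cj h A := by
  unfold cj; rw [Matrix.mul_neg, Matrix.neg_mul]

lemma cj_one (hh : ∀ i, 0 < h i) : cj h (1 : Matrix (Fin n) (Fin n) ℝ) = 1 := by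
  ext i j
  rw [cj_apply]
  by_cases hij : i = j
  · subst hij; simp; exact div_self (hh i).ne'
  · simp [Matrix.one_apply, hij]

lemma cj_Jmat (hh : ∀ i, 0 < h i) (k : Fin n) : cj h (Jmat k) = Jmat k := by
  ext i j
  rw [cj_apply]
  simp only [Jmat, Matrix.diagonal_apply]
  by_cases hij : i = j
  · subst hij
    simp only [if_pos rfl]
    by_cases hik : i = k <;> simp [hik] <;> exact div_self (hh _).ne'
  · simp [hij]

lemma cj_matPos (hh : ∀ i, 0 < h i) (A : Matrix (Fin n) (Fin n) ℝ) :
    matPos (cj h A) = cj h (matPos A) := by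
  ext i j
  simp only [matPos, cj_apply]
  have hc : 0 < h i * (h j)⁻¹ := mul_pos (hh i) (inv_pos.2 (hh j))
  rcases le_total (A i j) 0 with hA | hA
  · rw [max_eq_right hA, max_eq_right, mul_zero, zero_mul]
    calc h i * A i j * (h j)⁻¹ = (h i * (h j)⁻¹) * A i j := by ring
    _ ≤ 0 := mul_nonpos_of_nonneg_of_nonpos hc.le hA
  · rw [max_eq_left hA, max_eq_left]
    calc (0:ℝ) ≤ (h i * (h j)⁻¹) * A i j := mul_nonneg hc.le hA
    _ = h i * A i j * (h j)⁻¹ := by ring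

lemma cj_colOnly (k : Fin n) (A : Matrix (Fin n) (Fin n) ℝ) :
    colOnly k (cj h A) = cj h (colOnly k A) := by
  ext i j
  simp only [colOnly, cj_apply]
  split_ifs <;> simp

lemma cj_rowOnly (k : Fin n) (A : Matrix (Fin n) (Fin n) ℝ) :
    rowOnly k (cj h A) = cj h (rowOnly k A) := by
  ext i j
  simp only [rowOnly, cj_apply]
  split_ifs <;> simp

lemma cj_mutB (hh : ∀ i, 0 < h i) (A : Matrix (Fin n) (Fin n) ℝ) (k : Fin n) :
    mutB (cj h A) k = cj h (mutB A k) := by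
  unfold mutB
  conv_lhs => rw [← cj_neg h A, cj_matPos h hh, cj_matPos h hh, cj_colOnly, cj_rowOnly,
    ← cj_Jmat h hh k, ← cj_add, ← cj_add, ← cj_mul h hh, ← cj_mul h hh]

lemma cj_step (hh : ∀ i, 0 < h i) (B0 : Matrix (Fin n) (Fin n) ℝ)
    (X : Matrix (Fin n) (Fin n) ℝ × Matrix (Fin n) (Fin n) ℝ × Matrix (Fin n) (Fin n) ℝ)
    (k : Fin n) :
    stepBCG (cj h B0) (cj h X.1, cj h X.2.1, cj h X.2.2) k =
      (cj h (stepBCG B0 X k).1, cj h (stepBCG B0 X k).2.1, cj h (stepBCG B0 X k).2.2) := by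
  unfold stepBCG
  refine Prod.ext ?_ (Prod.ext ?_ ?_) <;> simp only
  · exact cj_mutB h hh X.1 k
  · conv_lhs => rw [← cj_neg h X.2.1, cj_matPos h hh, cj_matPos h hh, cj_rowOnly, cj_colOnly,
      ← cj_Jmat h hh k, ← cj_mul h hh, ← cj_mul h hh, ← cj_mul h hh,
      ← cj_add, ← cj_add]
  · conv_lhs => rw [← cj_neg h X.1, ← cj_neg h X.2.1, cj_matPos h hh, cj_matPos h hh,
      cj_colOnly, cj_colOnly, ← cj_Jmat h hh k, ← cj_mul h hh, ← cj_mul h hh,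
      ← cj_mul h hh, ← cj_add, ← cj_sub]

lemma cj_foldl (hh : ∀ i, 0 < h i) (B0 : Matrix (Fin n) (Fin n) ℝ) (w : List (Fin n)) :
    ∀ X : Matrix (Fin n) (Fin n) ℝ × Matrix (Fin n) (Fin n) ℝ × Matrix (Fin n) (Fin n) ℝ,
    w.foldl (stepBCG (cj h B0)) (cj h X.1, cj h X.2.1, cj h X.2.2) =
      (cj h (w.foldl (stepBCG B0) X).1, cj h (w.foldl (stepBCG B0) X).2.1,
       cj h (w.foldl (stepBCG B0) X).2.2) := by
  induction w with
  | nil => intro X; rfl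
  | cons k w ih =>
    intro X
    simp only [List.foldl_cons]
    rw [cj_step h hh B0 X k, ih (stepBCG B0 X k)]

end Aux

/-- positive conjugation compatibility: if `B̂ = H B H⁻¹` for a positive
diagonal matrix `H = diag h`, then at every vertex `w`,
`B̂_w = H B_w H⁻¹`, `Ĉ_w = H C_w H⁻¹`, `Ĝ_w = H G_w H⁻¹`. -/
theorem stmt11 {n : ℕ} (B : Matrix (Fin n) (Fin n) ℝ)
    (hB : SkewSymmetrizable B) (h : Fin n → ℝ) (hh : ∀ i, 0 < h i) :
    ∀ w : List (Fin n),
      Bpat (Matrix.diagonal h * B * Matrix.diagonal (fun i => (h i)⁻¹)) w =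
        Matrix.diagonal h * Bpat B w * Matrix.diagonal (fun i => (h i)⁻¹) ∧
      Cpat (Matrix.diagonal h * B * Matrix.diagonal (fun i => (h i)⁻¹)) w =
        Matrix.diagonal h * Cpat B w * Matrix.diagonal (fun i => (h i)⁻¹) ∧
      Gpat (Matrix.diagonal h * B * Matrix.diagonal (fun i => (h i)⁻¹)) w =
        Matrix.diagonal h * Gpat B w * Matrix.diagonal (fun i => (h i)⁻¹) := by
  have key : ∀ w, BCG (cj h B) w =
      (cj h (BCG B w).1, cj h (BCG B w).2.1, cj h (BCG B w).2.2) := by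
    intro w
    unfold BCG
    simpa [cj_one h hh] using cj_foldl h hh B w (B, 1, 1)
  intro w
  exact ⟨congrArg Prod.fst (key w), congrArg (fun p => p.2.1) (key w),
    congrArg (fun p => p.2.2) (key w)⟩

end
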